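/- Let K be a field and a, b, c, d, x, y, z, t ∈ K with ax+by = 0, az+bt+cx+dy = 0, cz+dt = 0 and ad−bc ≠ 0. Then dx−bz = 0, at−cy = 0, dy−bt = −(az−cx), and (ad−bc)(xt−yz) = (az−cx)². (At any point of the variety of isotropic 2×4 matrices where the spinor minor Δ₁ = ad−bc is nonzero, the nonspinor minors vanish and the product of the two spinor minors is the perfect square (az−cx)².) -/
import Mathlib


/-- At any point of the variety of isotropic `2×4` matrices
`[[a,b,x,y],[c,d,z,t]]` (i.e. `ax+by = az+bt+cx+dy = cz+dt = 0`) where the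
spinor minor `Δ₁ = ad−bc` is nonzero, the nonspinor minors vanish
(`dx−bz = 0`, `at−cy = 0`), `dy−bt = −(az−cx)`, and the product of the two
spinor minors is the perfect square `(ad−bc)(xt−yz) = (az−cx)²`. -/
theorem isotropic_matrix_on_spinor_chart (K : Type*) [Field K]
    (a b c d x y z t : K)
    (h1 : a*x + b*y = 0) (h2 : a*z + b*t + c*x + d*y = 0) (h3 : c*z + d*t = 0)
    (hΔ : a*d - b*c ≠ 0) :
    d*x - b*z = 0 ∧ a*t - c*y = 0 ∧ d*y - b*t = -(a*z - c*x) ∧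
    (a*d - b*c) * (x*t - y*z) = (a*z - c*x)^2 := by
  have hx : (a*d-b*c)*x = -b*(c*x+d*y) := by linear_combination d*h1
  have hy : (a*d-b*c)*y = a*(c*x+d*y) := by linear_combination (-c)*h1
  have hz : (a*d-b*c)*z = -d*(c*x+d*y) := by linear_combination (-b)*h3 + d*h2
  have ht : (a*d-b*c)*t = c*(c*x+d*y) := by linear_combination a*h3 - c*h2
  refine ⟨?_, ?_, ?_, ?_⟩
  · have : (a*d-b*c)*(d*x-b*z) = (a*d-b*c)*0 := by linear_combination d*hx - b*hz
    exact mul_left_cancel₀ hΔ this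
  · have : (a*d-b*c)*(a*t-c*y) = (a*d-b*c)*0 := by linear_combination a*ht - c*hy
    exact mul_left_cancel₀ hΔ this
  · have : (a*d-b*c)*(d*y-b*t) = (a*d-b*c)*(-(a*z-c*x)) := by
      linear_combination d*hy - b*ht + a*hz - c*hx
    exact mul_left_cancel₀ hΔ this
  · have h2sq : (a*d-b*c)^2 ≠ 0 := pow_ne_zero 2 hΔ
    have : (a*d-b*c)^2*((a*d-b*c)*(x*t-y*z)) = (a*d-b*c)^2*((a*z-c*x)^2) := by
      linear_combination ((a*d-b*c)*t)*((a*d-b*c)*hx) + (-b*(c*x+d*y))*((a*d-b*c)*ht)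
        - ((a*d-b*c)*z)*((a*d-b*c)*hy) - (a*(c*x+d*y))*((a*d-b*c)*hz)
        - (a*(a*d-b*c)*z - c*(a*d-b*c)*x + (-(a*d)+b*c)*(c*x+d*y))*(a*hz - c*hx)
    exact mul_left_cancel₀ h2sq this
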